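/- arXiv:2501.08256 — 4 statements merged into one kernel-verified Lean document; each statement's English description precedes it below -/
import Mathlib

section
/- Let (γ_n) be a sequence of positive reals with ∑γ_n = ∞ and γ_n → 0, and let (y_n) be a sequence in ℝ^d such that for every ε > 0 there exist δ > 0 and N with |∑_{k=n}^m y_k| < ε whenever N ≤ n ≤ m and ∑_{k=n}^m γ_k < δ. Define f_1 piecewise constant with f_1(t) = ∑_{i=1}^k y_i on [t_{k-1}, t_k), t_n = ∑_{k=1}^n γ_k, and f_n(t) = f_1(t + t_{n-1}). Then for every ε > 0 and T > 0 there exists δ > 0 such that limsup_{n→∞} |f_n(t) - f_n(s)| < ε whenever |t-s| < δ and s,t ≤ T. -/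
open Filter Finset

/-- (ii) ⟹ (i): smallness of partial sums over short time windows implies
equicontinuity in the extended sense of the shifted interpolations. -/
theorem stmt1 (d : ℕ) (γ : ℕ → ℝ) (y : ℕ → EuclideanSpace ℝ (Fin d))
    (hγpos : ∀ n, 0 < γ n)
    (hγdiv : Tendsto (fun n => ∑ k ∈ Finset.Icc 1 n, γ k) atTop atTop)
    (hγ0 : Tendsto γ atTop (nhds 0))
    (hy : ∀ ε > (0:ℝ), ∃ δ > (0:ℝ), ∃ N : ℕ, ∀ n m : ℕ, N ≤ n → n ≤ m →
      (∑ k ∈ Finset.Icc n m, γ k) < δ → ‖∑ k ∈ Finset.Icc n m, y k‖ < ε)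
    (t : ℕ → ℝ) (ht : ∀ n, t n = ∑ k ∈ Finset.Icc 1 n, γ k)
    (f : ℕ → ℝ → EuclideanSpace ℝ (Fin d))
    (hf1 : ∀ k, 1 ≤ k → ∀ s : ℝ, t (k - 1) ≤ s → s < t k →
      f 1 s = ∑ i ∈ Finset.Icc 1 k, y i)
    (hfn : ∀ n, 1 ≤ n → ∀ s : ℝ, f n s = f 1 (s + t (n - 1))) :
    ∀ ε > (0:ℝ), ∀ T > (0:ℝ), ∃ δ > (0:ℝ), ∀ s u : ℝ, 0 ≤ s → 0 ≤ u →
      s ≤ T → u ≤ T → |u - s| < δ →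
      Filter.limsup (fun n => ‖f n u - f n s‖) atTop < ε := by
  classical
  have ht0 : t 0 = 0 := by simp [ht]
  have htsucc : ∀ n : ℕ, t (n + 1) = t n + γ (n + 1) := by
    intro n
    rw [ht, ht, Finset.sum_Icc_succ_top (by omega : 1 ≤ n + 1)]
  have htmono : StrictMono t := strictMono_nat_of_lt_succ fun n => by
    rw [htsucc]; linarith [hγpos (n + 1)]
  have htnonneg : ∀ n, 0 ≤ t n := fun n => ht0 ▸ htmono.monotone (Nat.zero_le n)
  have httop : Tendsto t atTop atTop := by
    have heq : t = fun n => ∑ k ∈ Finset.Icc 1 n, γ k := funext ht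
    rw [heq]; exact hγdiv
  have hIccIoc : ∀ m : ℕ, Finset.Icc 1 m = Finset.Ioc 0 m := fun m =>
    Finset.Icc_add_one_left_eq_Ioc 0 m
  have htI : ∀ n, t n = ∑ k ∈ Finset.Ioc 0 n, γ k := fun n => by
    rw [ht, hIccIoc]
  have hindex : ∀ x : ℝ, 0 ≤ x → ∃ k : ℕ, 1 ≤ k ∧ t (k - 1) ≤ x ∧ x < t k ∧
      ∀ j, x < t j → k ≤ j := by
    intro x hx
    have hex : ∃ n, x < t n := (httop.eventually_gt_atTop x).exists
    have hspec : x < t (Nat.find hex) := Nat.find_spec hex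
    have hk1 : 1 ≤ Nat.find hex := by
      rcases Nat.eq_zero_or_pos (Nat.find hex) with h0 | h
      · rw [h0, ht0] at hspec; linarith
      · exact h
    refine ⟨Nat.find hex, hk1, ?_, hspec, fun j hj => Nat.find_min' hex hj⟩
    by_contra h
    push_neg at h
    have h2 := Nat.find_min' hex h
    omega
  intro ε hε T hT
  obtain ⟨δ0, hδ0, N, hN⟩ := hy (ε / 2) (by linarith)
  obtain ⟨N1, hN1⟩ := Filter.eventually_atTop.mp
    (hγ0.eventually_lt_const (show (0:ℝ) < δ0 / 2 by linarith))
  refine ⟨δ0 / 2, by linarith, ?_⟩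
  intro s u hs hu hsT huT hsu
  have key : ∀ a b : ℝ, 0 ≤ a → a ≤ b → b - a < δ0 / 2 →
      ∀ n : ℕ, max N N1 + 1 ≤ n → ‖f n b - f n a‖ ≤ ε / 2 := by
    intro a b ha hab hd n hn
    have hn1 : 1 ≤ n := by omega
    obtain ⟨j, hj1, hjle, hjlt, hjmin⟩ :=
      hindex (a + t (n - 1)) (add_nonneg ha (htnonneg _))
    obtain ⟨k, hk1, hkle, hklt, hkmin⟩ :=
      hindex (b + t (n - 1)) (add_nonneg (le_trans ha hab) (htnonneg _))
    have hjk : j ≤ k := hjmin k (lt_of_le_of_lt (by linarith) hklt)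
    have hnj : n ≤ j := by
      have h1 : t (n - 1) < t j := lt_of_le_of_lt (by linarith) hjlt
      have h2 : n - 1 < j := htmono.lt_iff_lt.mp h1
      omega
    have hnk : n ≤ k := le_trans hnj hjk
    rw [hfn n hn1 a, hfn n hn1 b, hf1 j hj1 _ hjle hjlt, hf1 k hk1 _ hkle hklt]
    rcases eq_or_lt_of_le hjk with h | h
    · rw [h]; simp; linarith
    · have hyd : (∑ i ∈ Finset.Icc 1 k, y i) - ∑ i ∈ Finset.Icc 1 j, y i
          = ∑ i ∈ Finset.Icc (j + 1) k, y i := by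
        rw [hIccIoc, hIccIoc, Finset.Icc_add_one_left_eq_Ioc,
          ← Finset.sum_Ioc_consecutive y (Nat.zero_le j) hjk]
        abel
      rw [hyd]
      have hγd : ∑ i ∈ Finset.Icc (j + 1) k, γ i = t k - t j := by
        rw [Finset.Icc_add_one_left_eq_Ioc, htI k, htI j,
          ← Finset.sum_Ioc_consecutive γ (Nat.zero_le j) hjk]
        ring
      have hγk : γ k < δ0 / 2 := hN1 k (by omega)
      have htk : t k = t (k - 1) + γ k := by
        have h2 := htsucc (k - 1)
        have h3 : k - 1 + 1 = k := by omega
        rwa [h3] at h2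
      have hsmall : ∑ i ∈ Finset.Icc (j + 1) k, γ i < δ0 := by
        rw [hγd]
        have h1 : t k ≤ b + t (n - 1) + γ k := by rw [htk]; linarith
        linarith
      exact le_of_lt (hN (j + 1) k (by omega) h hsmall)
  have hev : ∀ᶠ n in atTop, ‖f n u - f n s‖ ≤ ε / 2 := by
    rw [eventually_atTop]
    refine ⟨max N N1 + 1, fun n hn => ?_⟩
    rw [abs_sub_lt_iff] at hsu
    rcases le_total s u with h | h
    · exact key s u hs h (by linarith [hsu.1]) n hn
    · rw [norm_sub_rev]
      exact key u s hu h (by linarith [hsu.2]) n hn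
  have hls : Filter.limsup (fun n => ‖f n u - f n s‖) atTop ≤ ε / 2 :=
    Filter.limsup_le_of_le
      (Filter.isCoboundedUnder_le_of_le atTop fun n => norm_nonneg _) hev
  linarith
end

section
/- Let (γ_n) be positive with γ_n → 0 and ∑γ_n = ∞, let (u_n) be a sequence in ℝ^d with ∑ γ_n u_n convergent and γ_n |u_n| → 0, and let K = ∏_{i=1}^d [a_i,b_i] be a hyperrectangle. Define x_{n+1} = Π_K(x_n + γ_n u_n) with x_1 ∈ K, and let P_n = x_n + γ_n u_n - x_{n+1} be the projection residuals. Then for every ε > 0 there exist δ > 0 and N ∈ ℕ such that |∑_{k=n}^m P_k| < ε whenever N ≤ n ≤ m and ∑_{k=n}^m γ_k < δ. -/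
open Filter Finset

section Helpers

private lemma clamp_sq_le' {a b z t : ℝ} (hab : a ≤ b) (ht1 : a ≤ t) (ht2 : t ≤ b) :
    (z - max a (min b z))^2 ≤ (z - t)^2 := by
  rcases le_or_gt z a with h1 | h1
  · rw [min_eq_right (h1.trans hab), max_eq_left h1]; nlinarith
  · rcases le_or_gt z b with h2 | h2
    · rw [min_eq_right h2, max_eq_right h1.le]; nlinarith [sq_nonneg (z - t)]
    · rw [min_eq_left h2.le, max_eq_right hab]; nlinarith

private lemma clamp_eq_of_sq_le' {a b z t : ℝ} (hab : a ≤ b) (ht1 : a ≤ t) (ht2 : t ≤ b)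
    (h : (z - t)^2 ≤ (z - max a (min b z))^2) : t = max a (min b z) := by
  rcases le_or_gt z a with h1 | h1
  · rw [min_eq_right (h1.trans hab), max_eq_left h1] at h ⊢; nlinarith
  · rcases le_or_gt z b with h2 | h2
    · rw [min_eq_right h2, max_eq_right h1.le] at h ⊢; nlinarith
    · rw [min_eq_left h2.le, max_eq_right hab] at h ⊢; nlinarith

private lemma sum_Icc_telescope' (g : ℕ → ℝ) (n m : ℕ) (hnm : n ≤ m) :
    ∑ k ∈ Finset.Icc n m, (g k - g (k+1)) = g n - g (m+1) := by
  induction m, hnm using Nat.le_induction with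
  | base => simp
  | succ m hm ih => rw [Finset.sum_Icc_succ_top (by omega), ih]; ring

private lemma normsq' (d : ℕ) (v : EuclideanSpace ℝ (Fin d)) : ‖v‖^2 = ∑ i, (v i)^2 := by
  rw [EuclideanSpace.norm_eq, Real.sq_sqrt (by positivity)]
  simp [Real.norm_eq_abs, sq_abs]

private lemma coordle' (d : ℕ) (v : EuclideanSpace ℝ (Fin d)) (i : Fin d) : |v i| ≤ ‖v‖ := by
  rw [EuclideanSpace.norm_eq, ← Real.sqrt_sq_eq_abs]
  apply Real.sqrt_le_sqrt
  have := Finset.single_le_sum (f := fun j => ‖v j‖^2) (fun j _ => by positivity)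
    (Finset.mem_univ i)
  simpa [Real.norm_eq_abs, sq_abs] using this

private lemma proj_eq_clamp' (d : ℕ) (a b : Fin d → ℝ) (hab : ∀ i, a i < b i)
    (K : Set (EuclideanSpace ℝ (Fin d)))
    (hK : K = {z : EuclideanSpace ℝ (Fin d) | ∀ i, z i ∈ Set.Icc (a i) (b i)})
    (proj : EuclideanSpace ℝ (Fin d) → EuclideanSpace ℝ (Fin d))
    (hproj : ∀ z, proj z ∈ K ∧ ∀ w ∈ K, ‖z - proj z‖ ≤ ‖z - w‖) :
    ∀ z i, proj z i = max (a i) (min (b i) (z i)) := by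
  intro z i
  set w : EuclideanSpace ℝ (Fin d) :=
    (WithLp.equiv 2 (Fin d → ℝ)).symm (fun j => max (a j) (min (b j) (z j))) with hw
  have hwi : ∀ j, w j = max (a j) (min (b j) (z j)) := fun j => rfl
  have hwK : w ∈ K := by
    rw [hK]
    intro j
    rw [hwi j]
    exact ⟨le_max_left _ _, max_le (hab j).le (min_le_left _ _)⟩
  obtain ⟨hpK, hmin⟩ := hproj z
  have hpco : ∀ j, a j ≤ proj z j ∧ proj z j ≤ b j := by
    rw [hK] at hpK; exact fun j => hpK j
  have h1 : ‖z - proj z‖ ≤ ‖z - w‖ := hmin w hwK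
  have h2 : ‖z - proj z‖^2 ≤ ‖z - w‖^2 := by
    apply pow_le_pow_left₀ (norm_nonneg _) h1
  rw [normsq', normsq'] at h2
  have hterm : ∀ j : Fin d, (z j - w j)^2 ≤ (z j - proj z j)^2 := by
    intro j
    rw [hwi j]
    exact clamp_sq_le' (hab j).le (hpco j).1 (hpco j).2
  have hsub : ∀ (v : EuclideanSpace ℝ (Fin d)) j, (z - v) j = z j - v j := fun _ _ => rfl
  simp only [hsub] at h2
  have heq : ∀ j : Fin d, (z j - proj z j)^2 ≤ (z j - w j)^2 := by
    by_contra hcon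
    push_neg at hcon
    obtain ⟨j0, hj0⟩ := hcon
    have : ∑ j, (z j - w j)^2 < ∑ j, (z j - proj z j)^2 :=
      Finset.sum_lt_sum (fun j _ => hterm j) ⟨j0, Finset.mem_univ j0, hj0⟩
    linarith
  have := heq i
  rw [hwi i] at this
  exact clamp_eq_of_sq_le' (hab i).le (hpco i).1 (hpco i).2 this

private lemma coord_key' (a b : ℝ) (ε' : ℝ) (hε : 0 < ε') (hεab : 2*ε' < b - a)
    (s c : ℕ → ℝ) (n : ℕ) (hsa : a ≤ s n) (hsb : s n ≤ b)
    (M : ℕ) (hnM : n ≤ M)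
    (hrec : ∀ k, n ≤ k → k ≤ M → s (k+1) = max a (min b (s k + c k)))
    (hsum : ∀ n' m', n ≤ n' → m' ≤ M → |∑ k ∈ Finset.Icc n' m', c k| ≤ ε') :
    |s (M+1) - s n| ≤ 3*ε' := by
  have hab : a < b := by linarith
  have key : ∀ t, n ≤ t → t ≤ M →
      (s (t+1) = s n + ∑ k ∈ Finset.Icc n t, c k) ∨
      (∃ j, n ≤ j ∧ j ≤ t ∧ (s (j+1) = a ∨ s (j+1) = b) ∧ |s (j+1) - s n| ≤ 2*ε' ∧
        s (t+1) = s (j+1) + ∑ k ∈ Finset.Icc (j+1) t, c k) := by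
    intro t hnt
    induction t, hnt using Nat.le_induction with
    | base =>
      intro hnM'
      have hr := hrec n le_rfl hnM'
      have hc : |c n| ≤ ε' := by
        have := hsum n n le_rfl hnM'
        simpa using this
      have hc1 := (abs_le.mp hc).1
      have hc2 := (abs_le.mp hc).2
      rcases le_or_gt (s n + c n) a with h1 | h1
      · have hend : s (n+1) = a := by
          rw [hr, min_eq_right (h1.trans hab.le), max_eq_left h1]
        right
        refine ⟨n, le_rfl, le_rfl, Or.inl hend, ?_, ?_⟩
        · rw [hend, abs_sub_comm, abs_of_nonneg (by linarith)]; linarith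
        · rw [Finset.Icc_eq_empty (by omega), Finset.sum_empty, add_zero]
      · rcases le_or_gt (s n + c n) b with h2 | h2
        · left
          rw [hr, min_eq_right h2, max_eq_right h1.le, Finset.Icc_self,
            Finset.sum_singleton]
        · have hend : s (n+1) = b := by
            rw [hr, min_eq_left h2.le, max_eq_right hab.le]
          right
          refine ⟨n, le_rfl, le_rfl, Or.inr hend, ?_, ?_⟩
          · rw [hend, abs_of_nonneg (by linarith)]; linarith
          · rw [Finset.Icc_eq_empty (by omega), Finset.sum_empty, add_zero]
    | succ t ht ih =>
      intro htM
      have ihh := ih (by omega)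
      have hr := hrec (t+1) (by omega) htM
      rcases ihh with h | ⟨j, hnj, hjt, hjend, hjb, hje⟩
      · have hT : |∑ k ∈ Finset.Icc n (t+1), c k| ≤ ε' := hsum n (t+1) le_rfl htM
        have hT1 := (abs_le.mp hT).1
        have hT2 := (abs_le.mp hT).2
        have hv : s (t+1) + c (t+1) = s n + ∑ k ∈ Finset.Icc n (t+1), c k := by
          rw [Finset.sum_Icc_succ_top (by omega), h]; ring
        rcases le_or_gt (s (t+1) + c (t+1)) a with h1 | h1
        · have hend : s (t+2) = a := by
            rw [hr, min_eq_right (h1.trans hab.le), max_eq_left h1]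
          right
          refine ⟨t+1, by omega, le_rfl, Or.inl hend, ?_, ?_⟩
          · rw [hend, abs_sub_comm, abs_of_nonneg (by linarith)]; linarith
          · rw [hend, Finset.Icc_eq_empty (by omega), Finset.sum_empty, add_zero]
        · rcases le_or_gt (s (t+1) + c (t+1)) b with h2 | h2
          · left
            rw [hr, min_eq_right h2, max_eq_right h1.le, hv]
          · have hend : s (t+2) = b := by
              rw [hr, min_eq_left h2.le, max_eq_right hab.le]
            right
            refine ⟨t+1, by omega, le_rfl, Or.inr hend, ?_, ?_⟩
            · rw [hend, abs_of_nonneg (by linarith)]; linarith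
            · rw [hend, Finset.Icc_eq_empty (by omega), Finset.sum_empty, add_zero]
      · have hT : |∑ k ∈ Finset.Icc (j+1) (t+1), c k| ≤ ε' :=
          hsum (j+1) (t+1) (by omega) htM
        have hT1 := (abs_le.mp hT).1
        have hT2 := (abs_le.mp hT).2
        have hv : s (t+1) + c (t+1) = s (j+1) + ∑ k ∈ Finset.Icc (j+1) (t+1), c k := by
          rw [Finset.sum_Icc_succ_top (by omega), hje]; ring
        rcases le_or_gt (s (t+1) + c (t+1)) a with h1 | h1
        · rcases hjend with he | he
          · have hend : s (t+2) = a := by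
              rw [hr, min_eq_right (h1.trans hab.le), max_eq_left h1]
            right
            refine ⟨t+1, by omega, le_rfl, Or.inl hend, ?_, ?_⟩
            · rw [hend, ← he]; exact hjb
            · rw [hend, Finset.Icc_eq_empty (by omega), Finset.sum_empty, add_zero]
          · exfalso; rw [he] at hv; linarith
        · rcases le_or_gt (s (t+1) + c (t+1)) b with h2 | h2
          · right
            refine ⟨j, hnj, by omega, hjend, hjb, ?_⟩
            rw [hr, min_eq_right h2, max_eq_right h1.le, hv]
          · rcases hjend with he | he
            · exfalso; rw [he] at hv; linarith
            · have hend : s (t+2) = b := by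
                rw [hr, min_eq_left h2.le, max_eq_right hab.le]
              right
              refine ⟨t+1, by omega, le_rfl, Or.inr hend, ?_, ?_⟩
              · rw [hend, ← he]; exact hjb
              · rw [hend, Finset.Icc_eq_empty (by omega), Finset.sum_empty, add_zero]
  rcases key M hnM le_rfl with h | ⟨j, hnj, hjM, _, hjb, hje⟩
  · have hT := hsum n M le_rfl le_rfl
    rw [h, add_sub_cancel_left]
    linarith [abs_le.mp hT]
  · have hT := hsum (j+1) M (by omega) le_rfl
    rw [hje]
    have h0 : s (j+1) + (∑ k ∈ Finset.Icc (j+1) M, c k) - s n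
        = (s (j+1) - s n) + ∑ k ∈ Finset.Icc (j+1) M, c k := by ring
    rw [h0]
    calc |(s (j+1) - s n) + ∑ k ∈ Finset.Icc (j+1) M, c k|
        ≤ |s (j+1) - s n| + |∑ k ∈ Finset.Icc (j+1) M, c k| := abs_add_le _ _
      _ ≤ 2*ε' + ε' := add_le_add hjb hT
      _ = 3*ε' := by ring

end Helpers

/-- Deterministic core of the main equicontinuity theorem: control of the
accumulated projection residuals of the projected iteration on a hyperrectangle. -/
theorem stmt5 (d : ℕ) (γ : ℕ → ℝ) (u : ℕ → EuclideanSpace ℝ (Fin d))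
    (a b : Fin d → ℝ) (hab : ∀ i, a i < b i)
    (K : Set (EuclideanSpace ℝ (Fin d)))
    (hK : K = {z : EuclideanSpace ℝ (Fin d) | ∀ i, z i ∈ Set.Icc (a i) (b i)})
    (proj : EuclideanSpace ℝ (Fin d) → EuclideanSpace ℝ (Fin d))
    (hproj : ∀ z, proj z ∈ K ∧ ∀ w ∈ K, ‖z - proj z‖ ≤ ‖z - w‖)
    (hγpos : ∀ n, 0 < γ n) (hγ0 : Tendsto γ atTop (nhds 0))
    (hγdiv : Tendsto (fun n => ∑ k ∈ Finset.Icc 1 n, γ k) atTop atTop)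
    (hconv : ∃ L, Tendsto (fun n => ∑ k ∈ Finset.Icc 1 n, γ k • u k) atTop (nhds L))
    (hγu : Tendsto (fun n => γ n * ‖u n‖) atTop (nhds 0))
    (x : ℕ → EuclideanSpace ℝ (Fin d)) (hx1 : x 1 ∈ K)
    (hrec : ∀ n, 1 ≤ n → x (n + 1) = proj (x n + γ n • u n))
    (P : ℕ → EuclideanSpace ℝ (Fin d))
    (hP : ∀ n, P n = x n + γ n • u n - x (n + 1)) :
    ∀ ε > (0:ℝ), ∃ δ > (0:ℝ), ∃ N : ℕ, ∀ n m : ℕ, N ≤ n → n ≤ m →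
      (∑ k ∈ Finset.Icc n m, γ k) < δ → ‖∑ k ∈ Finset.Icc n m, P k‖ < ε := by
  intro ε hε
  rcases Nat.eq_zero_or_pos d with hd | hd
  · -- trivial case d = 0
    refine ⟨1, one_pos, 0, fun n m _ _ _ => ?_⟩
    have : ‖∑ k ∈ Finset.Icc n m, P k‖ = 0 := by
      subst hd
      rw [EuclideanSpace.norm_eq]
      simp
    rw [this]; exact hε
  -- d ≥ 1
  haveI : Nonempty (Fin d) := Fin.pos_iff_nonempty.mp hd
  have hsd : (0:ℝ) < Real.sqrt d := Real.sqrt_pos.mpr (by exact_mod_cast hd)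
  set ε' : ℝ := min (ε / (8 * Real.sqrt d))
      (Finset.univ.inf' Finset.univ_nonempty (fun i => (b i - a i)/4)) with hε'def
  have hε'pos : 0 < ε' := by
    apply lt_min
    · positivity
    · rw [Finset.lt_inf'_iff]
      intro i _
      linarith [hab i]
  have hε'i : ∀ i, 2*ε' < b i - a i := by
    intro i
    have h1 : ε' ≤ (b i - a i)/4 := le_trans (min_le_right _ _)
      (Finset.inf'_le _ (Finset.mem_univ i))
    linarith [hab i]
  have hε'ε : ε' ≤ ε / (8 * Real.sqrt d) := min_le_left _ _
  -- Cauchy property of the partial sums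
  obtain ⟨L, hL⟩ := hconv
  have hC := hL.cauchySeq
  rw [Metric.cauchySeq_iff] at hC
  obtain ⟨N₁, hN₁⟩ := hC ε' hε'pos
  refine ⟨1, one_pos, N₁ + 2, fun n m hNn hnm _ => ?_⟩
  have hn1 : 1 ≤ n := by omega
  -- x stays in K coordinatewise
  have hxK : ∀ k, 1 ≤ k → ∀ i, a i ≤ x k i ∧ x k i ≤ b i := by
    intro k hk
    induction k, hk using Nat.le_induction with
    | base =>
      rw [hK] at hx1
      exact fun i => hx1 i
    | succ k hk ih =>
      intro i
      have : x (k+1) ∈ K := by rw [hrec k hk]; exact (hproj _).1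
      rw [hK] at this
      exact this i
  have hclamp := proj_eq_clamp' d a b hab K hK proj hproj
  -- coordinate recursion
  have hrecc : ∀ k, 1 ≤ k → ∀ i,
      x (k+1) i = max (a i) (min (b i) (x k i + γ k * u k i)) := by
    intro k hk i
    rw [hrec k hk, hclamp]
    rfl
  -- vector Cauchy bound on interval sums
  have hvec : ∀ n' m', n ≤ n' → m' ≤ m → ‖∑ k ∈ Finset.Icc n' m', γ k • u k‖ ≤ ε' := by
    intro n' m' hn' hm'
    rcases lt_or_ge m' n' with h | h
    · rw [Finset.Icc_eq_empty (by omega), Finset.sum_empty, norm_zero]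
      exact hε'pos.le
    · obtain ⟨p, rfl⟩ : ∃ p, n' = p + 1 := ⟨n' - 1, by omega⟩
      have hsplit : (∑ k ∈ Finset.Ioc 0 p, γ k • u k) + ∑ k ∈ Finset.Ioc p m', γ k • u k
          = ∑ k ∈ Finset.Ioc 0 m', γ k • u k :=
        Finset.sum_Ioc_consecutive _ (by omega) (by omega)
      have hIcc : ∀ t : ℕ, ∑ k ∈ Finset.Icc 1 t, γ k • u k = ∑ k ∈ Finset.Ioc 0 t, γ k • u k := by
        intro t
        rw [← Finset.Icc_add_one_left_eq_Ioc]; rfl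
      have hIoc : Finset.Icc (p+1) m' = Finset.Ioc p m' := by rw [Finset.Icc_add_one_left_eq_Ioc]
      have hd1 : dist (∑ k ∈ Finset.Icc 1 m', γ k • u k) (∑ k ∈ Finset.Icc 1 p, γ k • u k) < ε' :=
        hN₁ m' (by omega) p (by omega)
      rw [dist_eq_norm] at hd1
      have heq : ∑ k ∈ Finset.Icc (p+1) m', γ k • u k
          = (∑ k ∈ Finset.Icc 1 m', γ k • u k) - ∑ k ∈ Finset.Icc 1 p, γ k • u k := by
        rw [hIoc, hIcc, hIcc]
        rw [eq_sub_iff_add_eq, add_comm]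
        exact hsplit
      rw [heq]
      exact hd1.le
  -- per-coordinate bound
  have hcoord : ∀ i : Fin d, |(∑ k ∈ Finset.Icc n m, P k) i| ≤ 4*ε' := by
    intro i
    set s : ℕ → ℝ := fun k => x k i with hs
    set c : ℕ → ℝ := fun k => γ k * u k i with hc
    have hsum_i : ∀ n' m', n ≤ n' → m' ≤ m → |∑ k ∈ Finset.Icc n' m', c k| ≤ ε' := by
      intro n' m' hn' hm'
      have h1 : ∑ k ∈ Finset.Icc n' m', c k = (∑ k ∈ Finset.Icc n' m', γ k • u k) i :=
        by rw [WithLp.ofLp_sum, Finset.sum_apply]; rfl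
      rw [h1]
      exact le_trans (coordle' d _ i) (hvec n' m' hn' hm')
    have hxn := hxK n hn1 i
    have hkey := coord_key' (a i) (b i) ε' hε'pos (hε'i i) s c n hxn.1 hxn.2 m hnm
      (fun k hk1 hk2 => hrecc k (by omega) i)
      hsum_i
    -- evaluate the sum of P coordinatewise
    have hPsum : (∑ k ∈ Finset.Icc n m, P k) i
        = (s n - s (m+1)) + ∑ k ∈ Finset.Icc n m, c k := by
      rw [WithLp.ofLp_sum, Finset.sum_apply]
      have hPk : ∀ k ∈ Finset.Icc n m, P k i = (s k - s (k+1)) + c k := by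
        intro k hk
        rw [hP k]
        show x k i + γ k * u k i - x (k+1) i = (x k i - x (k+1) i) + γ k * u k i
        ring
      rw [Finset.sum_congr rfl hPk, Finset.sum_add_distrib,
        sum_Icc_telescope' s n m hnm]
    rw [hPsum]
    have h2 := hsum_i n m le_rfl le_rfl
    calc |(s n - s (m+1)) + ∑ k ∈ Finset.Icc n m, c k|
        ≤ |s n - s (m+1)| + |∑ k ∈ Finset.Icc n m, c k| := abs_add_le _ _
      _ ≤ 3*ε' + ε' := by
          refine add_le_add ?_ h2
          rw [abs_sub_comm]
          exact hkey
      _ = 4*ε' := by ring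
  -- assemble the norm bound
  set V : EuclideanSpace ℝ (Fin d) := ∑ k ∈ Finset.Icc n m, P k with hV
  have hnsq : ‖V‖^2 ≤ d * (4*ε')^2 := by
    rw [normsq' d V]
    calc ∑ i, (V i)^2 ≤ ∑ _i : Fin d, (4*ε')^2 := by
          apply Finset.sum_le_sum
          intro i _
          rw [← sq_abs]
          apply pow_le_pow_left₀ (abs_nonneg _) (hcoord i)
      _ = d * (4*ε')^2 := by
          rw [Finset.sum_const, Finset.card_univ, Fintype.card_fin, nsmul_eq_mul]
  have hnb : ‖V‖ ≤ Real.sqrt d * (4*ε') := by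
    have h1 : ‖V‖ ≤ Real.sqrt (d * (4*ε')^2) := by
      rw [← Real.sqrt_sq (norm_nonneg V)]
      exact Real.sqrt_le_sqrt hnsq
    have h2 : Real.sqrt (d * (4*ε')^2) = Real.sqrt d * (4*ε') := by
      rw [Real.sqrt_mul (by positivity), Real.sqrt_sq (by positivity)]
    rw [← h2]; exact h1
  have hfinal : Real.sqrt d * (4*ε') < ε := by
    have h3 : Real.sqrt d * (4*ε') ≤ Real.sqrt d * (4 * (ε / (8 * Real.sqrt d))) := by
      apply mul_le_mul_of_nonneg_left (by linarith) hsd.le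
    have h4 : Real.sqrt d * (4 * (ε / (8 * Real.sqrt d))) = ε / 2 := by
      field_simp
      ring
    linarith
  linarith [hnb, hfinal]
end

section
/- Under the same setup (γ_n positive, γ_n → 0, ∑γ_n = ∞; K a hyperrectangle; h bounded; r_n → 0; ∑γ_n e_n convergent; x_{n+1} = Π_K(x_n + γ_n(h(x_n)+e_n+r_n)); P_n the projection residuals), define Z_1(t) = ∑_{s=1}^k P_s on [t_{k-1}, t_k) and Z_n(t) = Z_1(t + t_{n-1}). If a subsequence (Z_{n_k}) converges uniformly on compact intervals to a function Z : [0,∞) → ℝ^d, then Z is Lipschitz continuous with Lipschitz constant at most (H+R)d, where H bounds |h| on K and R bounds sup_n |r_n|. -/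
open Filter Finset

lemma aux_coord_le_norm (d : ℕ) (v : EuclideanSpace ℝ (Fin d)) (j : Fin d) : |v j| ≤ ‖v‖ := by
  rw [EuclideanSpace.norm_eq]
  have h0 : |v j| = Real.sqrt (‖v j‖^2) := by
    rw [Real.norm_eq_abs, sq_abs, Real.sqrt_sq_eq_abs]
  rw [h0]
  exact Real.sqrt_le_sqrt (Finset.single_le_sum (f := fun i => ‖v i‖^2)
    (fun i _ => by positivity) (mem_univ j))

lemma aux_norm_le_l1 (d : ℕ) (v : EuclideanSpace ℝ (Fin d)) : ‖v‖ ≤ ∑ j, |v j| := by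
  rw [EuclideanSpace.norm_eq]
  have h1 : ∑ i, ‖v i‖^2 ≤ (∑ j, |v j|)^2 := by
    have h2 : ∀ i ∈ (univ : Finset (Fin d)), ‖v i‖^2 ≤ |v i| * ∑ j, |v j| := by
      intro i _
      rw [Real.norm_eq_abs, sq]
      exact mul_le_mul_of_nonneg_left (Finset.single_le_sum (f := fun j => |v j|)
        (fun j _ => abs_nonneg _) (mem_univ i)) (abs_nonneg _)
    calc ∑ i, ‖v i‖^2 ≤ ∑ i, |v i| * ∑ j, |v j| := Finset.sum_le_sum h2
      _ = (∑ j, |v j|)^2 := by rw [← Finset.sum_mul, sq]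
  calc Real.sqrt (∑ i, ‖v i‖^2) ≤ Real.sqrt ((∑ j, |v j|)^2) := Real.sqrt_le_sqrt h1
    _ = abs (∑ j, |v j|) := Real.sqrt_sq_eq_abs _
    _ = ∑ j, |v j| := abs_of_nonneg (Finset.sum_nonneg fun j _ => abs_nonneg _)

lemma aux_tele (σ : ℕ → ℝ) (p q : ℕ) (hpq : p ≤ q) :
    ∑ i ∈ Finset.Ioc p q, (σ i - σ (i+1)) = σ (p+1) - σ (q+1) := by
  induction q, hpq using Nat.le_induction with
  | base => simp
  | succ q hq ih =>
    rw [Finset.sum_Ioc_succ_top (by omega), ih]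
    ring

/-- Abstract one-coordinate bound for the accumulated clamping residuals. -/
lemma aux_sumA (σ c δ : ℕ → ℝ) (b : ℝ) (p q : ℕ) (hpq : p ≤ q)
    (hb : ∀ i, p+1 ≤ i → i ≤ q+1 → σ i ≤ b)
    (hstep : ∀ i, p+1 ≤ i → i ≤ q → σ (i+1) < b → σ i + c i + δ i ≤ σ (i+1))
    (ε : ℝ)
    (hδ : ∀ α β, p ≤ α → α ≤ β → β ≤ q → |∑ i ∈ Finset.Ioc α β, δ i| ≤ ε) :
    ∑ i ∈ Finset.Ioc p q, (σ i + c i + δ i - σ (i+1)) ≤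
      (∑ i ∈ Finset.Ioc p q, |c i|) + 2*ε := by
  classical
  have hid : ∑ i ∈ Finset.Ioc p q, (σ i + c i + δ i - σ (i+1))
      = (σ (p+1) - σ (q+1)) + (∑ i ∈ Finset.Ioc p q, c i)
        + (∑ i ∈ Finset.Ioc p q, δ i) := by
    rw [← aux_tele σ p q hpq, ← Finset.sum_add_distrib, ← Finset.sum_add_distrib]
    apply Finset.sum_congr rfl; intro i _; ring
  set J := Nat.findGreatest (fun i => σ (p+1) ≤ σ i) (q+1) with hJ
  have hJ1 : p + 1 ≤ J := Nat.le_findGreatest (by omega) le_rfl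
  have hJ2 : J ≤ q + 1 := Nat.findGreatest_le _
  have hJspec : σ (p+1) ≤ σ J :=
    Nat.findGreatest_spec (P := fun i => σ (p+1) ≤ σ i) (n := q+1) (m := p+1) (by omega) le_rfl
  have hgr : ∀ i, J < i → i ≤ q + 1 → σ i < σ (p+1) := by
    intro i h1 h2
    have := Nat.findGreatest_is_greatest (P := fun i => σ (p+1) ≤ σ i) (n := q+1) h1 h2
    linarith [lt_of_not_ge this]
  have chain : ∀ i, J ≤ i → i ≤ q + 1 →
      σ J + ∑ k ∈ Finset.Ico J i, (c k + δ k) ≤ σ i := by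
    intro i hi1 hi2
    induction i, hi1 using Nat.le_induction with
    | base => simp
    | succ i hi ih =>
      have hi2' : i ≤ q := by omega
      have h1 : σ (i+1) < b := lt_of_lt_of_le (hgr (i+1) (by omega) (by omega))
        (hb (p+1) le_rfl (by omega))
      have h2 := hstep i (by omega) hi2' h1
      have h3 := ih (by omega)
      rw [Finset.sum_Ico_succ_top hi]
      linarith
  have hchain := chain (q+1) hJ2 le_rfl
  have hIco : Finset.Ico J (q+1) = Finset.Ioc (J-1) q := by
    ext k; simp only [Finset.mem_Ico, Finset.mem_Ioc]; omega
  have hsplitδ : |∑ k ∈ Finset.Ico J (q+1), δ k| ≤ ε := by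
    rw [hIco]; exact hδ (J-1) q (by omega) (by omega) le_rfl
  have hcsum : ∑ k ∈ Finset.Ico J (q+1), (c k + δ k)
      = (∑ k ∈ Finset.Ico J (q+1), c k) + ∑ k ∈ Finset.Ico J (q+1), δ k :=
    Finset.sum_add_distrib
  have hsplitc : ∑ i ∈ Finset.Ioc p q, c i
      = (∑ i ∈ Finset.Ioc p (J-1), c i) + ∑ i ∈ Finset.Ioc (J-1) q, c i := by
    rw [← Finset.sum_Ioc_consecutive _ (by omega : p ≤ J - 1) (by omega : J - 1 ≤ q)]
  have h4 : ∑ i ∈ Finset.Ioc p (J-1), c i ≤ ∑ i ∈ Finset.Ioc p q, |c i| := by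
    calc ∑ i ∈ Finset.Ioc p (J-1), c i ≤ ∑ i ∈ Finset.Ioc p (J-1), |c i| :=
          Finset.sum_le_sum (fun i _ => le_abs_self _)
      _ ≤ ∑ i ∈ Finset.Ioc p q, |c i| := Finset.sum_le_sum_of_subset_of_nonneg
          (Finset.Ioc_subset_Ioc le_rfl (by omega)) (fun i _ _ => abs_nonneg _)
  have hδfull : |∑ i ∈ Finset.Ioc p q, δ i| ≤ ε := hδ p q le_rfl hpq le_rfl
  have h5 : σ (p+1) - σ (q+1) ≤ - (∑ k ∈ Finset.Ioc (J-1) q, c k) + ε := by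
    have h6 := hchain
    rw [hcsum, hIco] at h6
    have habs := abs_le.mp hsplitδ
    rw [hIco] at habs
    linarith [hJspec, habs.1]
  have habsfull := abs_le.mp hδfull
  rw [hid, hsplitc]
  linarith [habsfull.2]

lemma proj_upper (d : ℕ) (a b : Fin d → ℝ)
    (K : Set (EuclideanSpace ℝ (Fin d)))
    (hK : K = {z : EuclideanSpace ℝ (Fin d) | ∀ i, z i ∈ Set.Icc (a i) (b i)})
    (proj : EuclideanSpace ℝ (Fin d) → EuclideanSpace ℝ (Fin d))
    (hproj : ∀ z, proj z ∈ K ∧ ∀ w ∈ K, ‖z - proj z‖ ≤ ‖z - w‖)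
    (z : EuclideanSpace ℝ (Fin d)) (j : Fin d) (hlt : proj z j < b j) :
    z j ≤ proj z j := by
  by_contra hc
  push_neg at hc
  set w := proj z with hw
  set ε := min (b j - w j) (z j - w j) with hε
  have hε0 : 0 < ε := lt_min (by linarith) (by linarith)
  have hεA : ε ≤ z j - w j := min_le_right _ _
  have hεb : ε ≤ b j - w j := min_le_left _ _
  set w' : EuclideanSpace ℝ (Fin d) := WithLp.toLp 2 (Function.update w j (w j + ε)) with hw'
  have hwK : w ∈ K := (hproj z).1
  have hwK' : ∀ i, a i ≤ w i ∧ w i ≤ b i := by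
    intro i; have := hK ▸ hwK; exact ⟨(this i).1, (this i).2⟩
  have hw'K : w' ∈ K := by
    rw [hK]
    intro i
    by_cases hij : i = j
    · subst hij
      simp only [hw', PiLp.toLp_apply, Function.update_self]
      exact ⟨by linarith [(hwK' i).1], by linarith⟩
    · simp only [hw', PiLp.toLp_apply, Function.update_of_ne hij]
      exact ⟨(hwK' i).1, (hwK' i).2⟩
  have hlt2 : ‖z - w'‖ < ‖z - w‖ := by
    rw [EuclideanSpace.norm_eq, EuclideanSpace.norm_eq]
    apply Real.sqrt_lt_sqrt (by positivity)
    apply Finset.sum_lt_sum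
    · intro i _
      by_cases hij : i = j
      · subst hij
        simp only [PiLp.sub_apply, hw', PiLp.toLp_apply, Function.update_self, Real.norm_eq_abs, sq_abs]
        nlinarith
      · simp [PiLp.sub_apply, hw', PiLp.toLp_apply, Function.update_of_ne hij]
    · refine ⟨j, mem_univ j, ?_⟩
      simp only [PiLp.sub_apply, hw', PiLp.toLp_apply, Function.update_self, Real.norm_eq_abs, sq_abs]
      nlinarith
  exact absurd ((hproj z).2 w' hw'K) (not_le.mpr hlt2)

lemma proj_lower (d : ℕ) (a b : Fin d → ℝ)
    (K : Set (EuclideanSpace ℝ (Fin d)))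
    (hK : K = {z : EuclideanSpace ℝ (Fin d) | ∀ i, z i ∈ Set.Icc (a i) (b i)})
    (proj : EuclideanSpace ℝ (Fin d) → EuclideanSpace ℝ (Fin d))
    (hproj : ∀ z, proj z ∈ K ∧ ∀ w ∈ K, ‖z - proj z‖ ≤ ‖z - w‖)
    (z : EuclideanSpace ℝ (Fin d)) (j : Fin d) (hlt : a j < proj z j) :
    proj z j ≤ z j := by
  by_contra hc
  push_neg at hc
  set w := proj z with hw
  set ε := min (w j - a j) (w j - z j) with hε
  have hε0 : 0 < ε := lt_min (by linarith) (by linarith)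
  have hεA : ε ≤ w j - z j := min_le_right _ _
  have hεb : ε ≤ w j - a j := min_le_left _ _
  set w' : EuclideanSpace ℝ (Fin d) := WithLp.toLp 2 (Function.update w j (w j - ε)) with hw'
  have hwK : w ∈ K := (hproj z).1
  have hwK' : ∀ i, a i ≤ w i ∧ w i ≤ b i := by
    intro i; have := hK ▸ hwK; exact ⟨(this i).1, (this i).2⟩
  have hw'K : w' ∈ K := by
    rw [hK]
    intro i
    by_cases hij : i = j
    · subst hij
      simp only [hw', PiLp.toLp_apply, Function.update_self]
      exact ⟨by linarith, by linarith [(hwK' i).2]⟩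
    · simp only [hw', PiLp.toLp_apply, Function.update_of_ne hij]
      exact ⟨(hwK' i).1, (hwK' i).2⟩
  have hlt2 : ‖z - w'‖ < ‖z - w‖ := by
    rw [EuclideanSpace.norm_eq, EuclideanSpace.norm_eq]
    apply Real.sqrt_lt_sqrt (by positivity)
    apply Finset.sum_lt_sum
    · intro i _
      by_cases hij : i = j
      · subst hij
        simp only [PiLp.sub_apply, hw', PiLp.toLp_apply, Function.update_self, Real.norm_eq_abs, sq_abs]
        nlinarith
      · simp [PiLp.sub_apply, hw', PiLp.toLp_apply, Function.update_of_ne hij]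
    · refine ⟨j, mem_univ j, ?_⟩
      simp only [PiLp.sub_apply, hw', PiLp.toLp_apply, Function.update_self, Real.norm_eq_abs, sq_abs]
      nlinarith
  exact absurd ((hproj z).2 w' hw'K) (not_le.mpr hlt2)

/-- Any uniform-on-compacts limit of the shifted accumulated-projection
interpolations is Lipschitz with constant `(H + R) * d`. -/
theorem stmt7 (d : ℕ) (γ : ℕ → ℝ)
    (e r : ℕ → EuclideanSpace ℝ (Fin d))
    (a b : Fin d → ℝ) (hab : ∀ i, a i < b i)
    (K : Set (EuclideanSpace ℝ (Fin d)))
    (hK : K = {z : EuclideanSpace ℝ (Fin d) | ∀ i, z i ∈ Set.Icc (a i) (b i)})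
    (hfun : EuclideanSpace ℝ (Fin d) → EuclideanSpace ℝ (Fin d))
    (H : ℝ) (hH : ∀ z ∈ K, ‖hfun z‖ ≤ H)
    (R : ℝ) (hR : ∀ n, ‖r n‖ ≤ R)
    (hγpos : ∀ n, 0 < γ n) (hγ0 : Tendsto γ atTop (nhds 0))
    (hγdiv : Tendsto (fun n => ∑ k ∈ Finset.Icc 1 n, γ k) atTop atTop)
    (hr : Tendsto r atTop (nhds 0))
    (he : ∃ L, Tendsto (fun n => ∑ k ∈ Finset.Icc 1 n, γ k • e k) atTop (nhds L))
    (proj : EuclideanSpace ℝ (Fin d) → EuclideanSpace ℝ (Fin d))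
    (hproj : ∀ z, proj z ∈ K ∧ ∀ w ∈ K, ‖z - proj z‖ ≤ ‖z - w‖)
    (x : ℕ → EuclideanSpace ℝ (Fin d)) (hx1 : x 1 ∈ K)
    (hrec : ∀ n, 1 ≤ n → x (n + 1) = proj (x n + γ n • (hfun (x n) + e n + r n)))
    (P : ℕ → EuclideanSpace ℝ (Fin d))
    (hP : ∀ n, P n = x n + γ n • (hfun (x n) + e n + r n) - x (n + 1))
    (t : ℕ → ℝ) (ht : ∀ n, t n = ∑ k ∈ Finset.Icc 1 n, γ k)
    (Z : ℕ → ℝ → EuclideanSpace ℝ (Fin d))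
    (hZ1 : ∀ k, 1 ≤ k → ∀ s : ℝ, t (k - 1) ≤ s → s < t k →
      Z 1 s = ∑ i ∈ Finset.Icc 1 k, P i)
    (hZn : ∀ n, 1 ≤ n → ∀ s : ℝ, Z n s = Z 1 (s + t (n - 1)))
    (φ : ℕ → ℕ) (hφ : StrictMono φ)
    (Zlim : ℝ → EuclideanSpace ℝ (Fin d))
    (hconv : ∀ T > (0:ℝ),
      TendstoUniformlyOn (fun k => Z (φ k)) Zlim atTop (Set.Icc 0 T)) :
    ∀ s u : ℝ, 0 ≤ s → 0 ≤ u →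
      ‖Zlim u - Zlim s‖ ≤ (H + R) * d * |u - s| := by
  classical
  have hH0 : 0 ≤ H := le_trans (norm_nonneg _) (hH (x 1) hx1)
  have hR0 : 0 ≤ R := le_trans (norm_nonneg _) (hR 0)
  have hIcc : ∀ n : ℕ, Finset.Icc 1 n = Finset.Ioc 0 n := by
    intro n; ext k; simp only [Finset.mem_Icc, Finset.mem_Ioc]; omega
  have ht0 : t 0 = 0 := by rw [ht]; simp
  have htsucc : ∀ m : ℕ, t (m+1) = t m + γ (m+1) := by
    intro m; rw [ht, ht, Finset.sum_Icc_succ_top (by omega)]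
  have htmono : Monotone t := by
    intro m n hmn
    rw [ht, ht]
    exact Finset.sum_le_sum_of_subset_of_nonneg (Finset.Icc_subset_Icc le_rfl hmn)
      (fun i _ _ => (hγpos i).le)
  have htIoc : ∀ p q : ℕ, p ≤ q → t q - t p = ∑ i ∈ Finset.Ioc p q, γ i := by
    intro p q hpq
    rw [ht, ht, hIcc, hIcc, ← Finset.sum_Ioc_consecutive _ (Nat.zero_le p) hpq]
    ring
  have htnn : ∀ n, 0 ≤ t n := by
    intro n; rw [ht]; exact Finset.sum_nonneg fun i _ => (hγpos i).le
  have hxK : ∀ n, 1 ≤ n → x n ∈ K := by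
    intro n hn
    induction n with
    | zero => omega
    | succ m _ =>
      rcases Nat.eq_zero_or_pos m with h|h
      · subst h; exact hx1
      · rw [hrec m h]; exact (hproj _).1
  have hxab : ∀ n, 1 ≤ n → ∀ j, a j ≤ x n j ∧ x n j ≤ b j := by
    intro n hn j
    have := hK ▸ hxK n hn
    exact ⟨(this j).1, (this j).2⟩
  have hT : Tendsto t atTop atTop := by
    have hteq : t = fun n => ∑ k ∈ Finset.Icc 1 n, γ k := funext ht
    rw [hteq]; exact hγdiv
  suffices key : ∀ s u : ℝ, 0 ≤ s → s ≤ u →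
      ‖Zlim u - Zlim s‖ ≤ (H + R) * d * (u - s) by
    intro s u hs hu
    rcases le_total s u with h|h
    · rw [abs_of_nonneg (by linarith)]; exact key s u hs h
    · rw [norm_sub_rev, abs_of_nonpos (by linarith)]
      have h2 := key u s hu h
      have h3 : (H + R) * d * (-(u - s)) = (H + R) * d * (s - u) := by ring
      rw [h3]; exact h2
  intro s u hs hsu
  have hu0 : 0 ≤ u := le_trans hs hsu
  refine le_of_forall_pos_le_add ?_
  intro η hη
  set C : ℝ := ((H + R) + 2) * d + 1 with hCdef
  have hC : 0 < C := by positivity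
  set η' := η / C with hη'def
  have hη'0 : 0 < η' := div_pos hη hC
  obtain ⟨L, hL⟩ := he
  have hcau : CauchySeq (fun n => ∑ k ∈ Finset.Icc 1 n, γ k • e k) := hL.cauchySeq
  obtain ⟨N₁, hN₁⟩ := Metric.cauchySeq_iff.mp hcau η' hη'0
  obtain ⟨N₂, hN₂⟩ := Metric.tendsto_atTop.mp hγ0 η' hη'0
  set N := max N₁ N₂ + 1 with hNdef
  have key2 : ∀ n, N ≤ n →
      ‖Z n u - Z n s‖ ≤ (H + R) * d * (u - s) + (C - 1) * η' := by
    intro n hn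
    have hn1 : 1 ≤ n := by omega
    have hex : ∀ y : ℝ, ∃ m, y < t m := fun y => (hT.eventually_gt_atTop y).exists
    have hexs := hex (s + t (n - 1))
    have hexu := hex (u + t (n - 1))
    set p := Nat.find hexs with hpdef
    set q := Nat.find hexu with hqdef
    have hp : s + t (n - 1) < t p := Nat.find_spec hexs
    have hq : u + t (n - 1) < t q := Nat.find_spec hexu
    have hs'0 : 0 ≤ s + t (n - 1) := add_nonneg hs (htnn _)
    have hp1 : 1 ≤ p := by
      by_contra hcp
      have hp0 : p = 0 := by omega
      rw [hp0, ht0] at hp; linarith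
    have hq1 : 1 ≤ q := by
      by_contra hcq
      have hq0 : q = 0 := by omega
      rw [hq0, ht0] at hq; linarith [htnn (n-1)]
    have hplow : t (p - 1) ≤ s + t (n - 1) := not_lt.mp (Nat.find_min hexs (by omega))
    have hqlow : t (q - 1) ≤ u + t (n - 1) := not_lt.mp (Nat.find_min hexu (by omega))
    have hpq : p ≤ q := Nat.find_min' hexs (by linarith)
    have hnp : n ≤ p := by
      by_contra hcp
      push_neg at hcp
      have h1 : t p ≤ t (n - 1) := htmono (by omega)
      linarith
    have hZdiff : Z n u - Z n s = ∑ i ∈ Finset.Ioc p q, P i := by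
      rw [hZn n hn1 u, hZn n hn1 s,
        hZ1 q hq1 (u + t (n - 1)) hqlow hq,
        hZ1 p hp1 (s + t (n - 1)) hplow hp,
        hIcc q, hIcc p, ← Finset.sum_Ioc_consecutive _ (Nat.zero_le p) hpq]
      abel
    have hcoord : ∀ j : Fin d,
        |(∑ i ∈ Finset.Ioc p q, P i) j| ≤ (H + R) * (t q - t p) + 2 * η' := by
      intro j
      have hPj : ∀ i : ℕ,
          P i j = x i j + γ i * (hfun (x i) j + r i j) + γ i * (e i j) - x (i+1) j := by
        intro i
        rw [hP i]
        simp only [PiLp.sub_apply, PiLp.add_apply, PiLp.smul_apply, smul_eq_mul]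
        ring
      have hyj : ∀ i : ℕ, (x i + γ i • (hfun (x i) + e i + r i)) j
          = x i j + γ i * (hfun (x i) j + r i j) + γ i * (e i j) := by
        intro i
        simp only [PiLp.add_apply, PiLp.smul_apply, smul_eq_mul]
        ring
      have hδwin : ∀ α β, p ≤ α → α ≤ β → β ≤ q →
          |∑ i ∈ Finset.Ioc α β, γ i * (e i j)| ≤ η' := by
        intro α β h1 h2 h3
        have hMd : (∑ k ∈ Finset.Icc 1 β, γ k • e k) - (∑ k ∈ Finset.Icc 1 α, γ k • e k)
            = ∑ i ∈ Finset.Ioc α β, γ i • e i := by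
          rw [hIcc, hIcc, ← Finset.sum_Ioc_consecutive _ (Nat.zero_le α) h2]
          abel
        have hsum2 : ∑ i ∈ Finset.Ioc α β, γ i * (e i j)
            = ((∑ k ∈ Finset.Icc 1 β, γ k • e k) - (∑ k ∈ Finset.Icc 1 α, γ k • e k)) j := by
          rw [hMd, WithLp.ofLp_sum, Finset.sum_apply]
          apply Finset.sum_congr rfl
          intro i _
          simp only [PiLp.smul_apply, smul_eq_mul]
        rw [hsum2]
        have hd := hN₁ β (by omega) α (by omega)
        calc |((∑ k ∈ Finset.Icc 1 β, γ k • e k) - (∑ k ∈ Finset.Icc 1 α, γ k • e k)) j|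
            ≤ ‖(∑ k ∈ Finset.Icc 1 β, γ k • e k) - (∑ k ∈ Finset.Icc 1 α, γ k • e k)‖ :=
              aux_coord_le_norm d _ j
          _ = dist (∑ k ∈ Finset.Icc 1 β, γ k • e k) (∑ k ∈ Finset.Icc 1 α, γ k • e k) :=
              (dist_eq_norm _ _).symm
          _ ≤ η' := le_of_lt hd
      have hb : ∀ i, p+1 ≤ i → i ≤ q+1 → x i j ≤ b j :=
        fun i h1 _ => (hxab i (by omega) j).2
      have hstep : ∀ i, p+1 ≤ i → i ≤ q → x (i+1) j < b j →
          x i j + γ i * (hfun (x i) j + r i j) + γ i * (e i j) ≤ x (i+1) j := by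
        intro i h1 h2 h3
        have hrec' := hrec i (by omega)
        have h4 : proj (x i + γ i • (hfun (x i) + e i + r i)) j < b j := by
          rw [← hrec']; exact h3
        have h5 := proj_upper d a b K hK proj hproj
          (x i + γ i • (hfun (x i) + e i + r i)) j h4
        rw [← hrec', hyj i] at h5
        exact h5
      have hup := aux_sumA (fun i => x i j) (fun i => γ i * (hfun (x i) j + r i j))
        (fun i => γ i * (e i j)) (b j) p q hpq hb hstep η' hδwin
      have hb' : ∀ i, p+1 ≤ i → i ≤ q+1 → -(x i j) ≤ -(a j) :=
        fun i h1 _ => neg_le_neg (hxab i (by omega) j).1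
      have hstep' : ∀ i, p+1 ≤ i → i ≤ q → -(x (i+1) j) < -(a j) →
          -(x i j) + -(γ i * (hfun (x i) j + r i j)) + -(γ i * (e i j)) ≤ -(x (i+1) j) := by
        intro i h1 h2 h3
        have hrec' := hrec i (by omega)
        have h4 : a j < proj (x i + γ i • (hfun (x i) + e i + r i)) j := by
          rw [← hrec']; linarith [neg_lt_neg_iff.mp h3]
        have h5 := proj_lower d a b K hK proj hproj
          (x i + γ i • (hfun (x i) + e i + r i)) j h4
        rw [← hrec', hyj i] at h5
        linarith
      have hδwin' : ∀ α β, p ≤ α → α ≤ β → β ≤ q →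
          |∑ i ∈ Finset.Ioc α β, -(γ i * (e i j))| ≤ η' := by
        intro α β h1 h2 h3
        rw [Finset.sum_neg_distrib, abs_neg]
        exact hδwin α β h1 h2 h3
      have hdn := aux_sumA (fun i => -(x i j)) (fun i => -(γ i * (hfun (x i) j + r i j)))
        (fun i => -(γ i * (e i j))) (-(a j)) p q hpq hb' hstep' η' hδwin'
      have habsc : ∀ i : ℕ, |-(γ i * (hfun (x i) j + r i j))| = |γ i * (hfun (x i) j + r i j)| :=
        fun i => abs_neg _
      have hsumPj : (∑ i ∈ Finset.Ioc p q, P i) j = ∑ i ∈ Finset.Ioc p q, P i j :=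
        by rw [WithLp.ofLp_sum, Finset.sum_apply]
      have hupP : ∑ i ∈ Finset.Ioc p q, P i j
          ≤ (∑ i ∈ Finset.Ioc p q, |γ i * (hfun (x i) j + r i j)|) + 2*η' := by
        calc ∑ i ∈ Finset.Ioc p q, P i j
            = ∑ i ∈ Finset.Ioc p q,
              (x i j + γ i * (hfun (x i) j + r i j) + γ i * (e i j) - x (i+1) j) :=
              Finset.sum_congr rfl (fun i _ => hPj i)
          _ ≤ _ := hup
      have hdnP : -(∑ i ∈ Finset.Ioc p q, P i j)
          ≤ (∑ i ∈ Finset.Ioc p q, |γ i * (hfun (x i) j + r i j)|) + 2*η' := by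
        have heq : ∑ i ∈ Finset.Ioc p q,
            (-(x i j) + -(γ i * (hfun (x i) j + r i j)) + -(γ i * (e i j)) - -(x (i+1) j))
            = -(∑ i ∈ Finset.Ioc p q, P i j) := by
          rw [← Finset.sum_neg_distrib]
          apply Finset.sum_congr rfl
          intro i _
          rw [hPj i]; ring
        have heq2 : ∑ i ∈ Finset.Ioc p q, |-(γ i * (hfun (x i) j + r i j))|
            = ∑ i ∈ Finset.Ioc p q, |γ i * (hfun (x i) j + r i j)| :=
          Finset.sum_congr rfl (fun i _ => habsc i)
        calc -(∑ i ∈ Finset.Ioc p q, P i j) = _ := heq.symm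
          _ ≤ (∑ i ∈ Finset.Ioc p q, |-(γ i * (hfun (x i) j + r i j))|) + 2*η' := hdn
          _ = _ := by rw [heq2]
      have habsP : |∑ i ∈ Finset.Ioc p q, P i j|
          ≤ (∑ i ∈ Finset.Ioc p q, |γ i * (hfun (x i) j + r i j)|) + 2*η' :=
        abs_le.mpr ⟨by linarith, hupP⟩
      have hcb : ∀ i ∈ Finset.Ioc p q, |γ i * (hfun (x i) j + r i j)| ≤ γ i * (H + R) := by
        intro i hi
        simp only [Finset.mem_Ioc] at hi
        have hxi : x i ∈ K := hxK i (by omega)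
        have h1 : |hfun (x i) j| ≤ H := le_trans (aux_coord_le_norm d _ j) (hH _ hxi)
        have h2 : |r i j| ≤ R := le_trans (aux_coord_le_norm d _ j) (hR i)
        rw [abs_mul, abs_of_pos (hγpos i)]
        have h3 := abs_add_le (hfun (x i) j) (r i j)
        have h4 : |hfun (x i) j + r i j| ≤ H + R := by linarith
        nlinarith [(hγpos i).le]
      have hcsum : ∑ i ∈ Finset.Ioc p q, |γ i * (hfun (x i) j + r i j)|
          ≤ (H + R) * (t q - t p) := by
        calc ∑ i ∈ Finset.Ioc p q, |γ i * (hfun (x i) j + r i j)|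
            ≤ ∑ i ∈ Finset.Ioc p q, γ i * (H + R) := Finset.sum_le_sum hcb
          _ = (∑ i ∈ Finset.Ioc p q, γ i) * (H + R) := by rw [Finset.sum_mul]
          _ = (H + R) * (t q - t p) := by rw [htIoc p q hpq]; ring
      rw [hsumPj]
      linarith
    rw [hZdiff]
    have hl1 := aux_norm_le_l1 d (∑ i ∈ Finset.Ioc p q, P i)
    have hsumb : ∑ j : Fin d, |(∑ i ∈ Finset.Ioc p q, P i) j|
        ≤ d * ((H + R) * (t q - t p) + 2 * η') := by
      calc ∑ j : Fin d, |(∑ i ∈ Finset.Ioc p q, P i) j|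
          ≤ ∑ _j : Fin d, ((H + R) * (t q - t p) + 2 * η') :=
            Finset.sum_le_sum (fun j _ => hcoord j)
        _ = d * ((H + R) * (t q - t p) + 2 * η') := by
            rw [Finset.sum_const, Finset.card_univ, Fintype.card_fin, nsmul_eq_mul]
    have htq : t q ≤ u + t (n - 1) + γ q := by
      have h1 := htsucc (q-1)
      have hq' : q - 1 + 1 = q := by omega
      rw [hq'] at h1
      linarith
    have hγq : γ q ≤ η' := by
      have h1 := hN₂ q (by omega)
      rw [Real.dist_eq, sub_zero] at h1
      exact le_trans (le_abs_self _) h1.le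
    have hwin : t q - t p ≤ (u - s) + η' := by linarith
    have hd0 : (0:ℝ) ≤ d := Nat.cast_nonneg d
    calc ‖∑ i ∈ Finset.Ioc p q, P i‖
        ≤ d * ((H + R) * (t q - t p) + 2 * η') := le_trans hl1 hsumb
      _ ≤ d * ((H + R) * ((u - s) + η') + 2 * η') := by
          have h1 : (H + R) * (t q - t p) ≤ (H + R) * ((u - s) + η') :=
            mul_le_mul_of_nonneg_left hwin (by linarith)
          have h2 : (H + R) * (t q - t p) + 2 * η' ≤ (H + R) * ((u - s) + η') + 2 * η' := by
            linarith
          exact mul_le_mul_of_nonneg_left h2 hd0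
      _ = (H + R) * d * (u - s) + (C - 1) * η' := by rw [hCdef]; ring
  have hmem_u : u ∈ Set.Icc (0:ℝ) (u+1) := ⟨hu0, by linarith⟩
  have hmem_s : s ∈ Set.Icc (0:ℝ) (u+1) := ⟨hs, by linarith⟩
  have hcu := (hconv (u+1) (by linarith)).tendsto_at hmem_u
  have hcs := (hconv (u+1) (by linarith)).tendsto_at hmem_s
  have hdiff : Tendsto (fun k => ‖Z (φ k) u - Z (φ k) s‖) atTop
      (nhds ‖Zlim u - Zlim s‖) := (hcu.sub hcs).norm
  have hev : ∀ᶠ k in atTop,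
      ‖Z (φ k) u - Z (φ k) s‖ ≤ (H + R) * d * (u - s) + (C - 1) * η' := by
    filter_upwards [eventually_ge_atTop N] with k hk
    exact key2 (φ k) (le_trans hk hφ.le_apply)
  have hfin := le_of_tendsto hdiff hev
  have hCη : (C - 1) * η' ≤ η := by
    have h1 : (C - 1) * η' ≤ C * η' := by nlinarith [hη'0.le]
    have h2 : C * η' = η := by rw [hη'def]; field_simp
    linarith
  linarith
end

section
/- Let K ⊆ ℝ^d be a nonempty closed convex set, a ∈ K, and X : ℝ → ℝ^d continuous with X(t₀) = a. Then ⋂_{δ>0} conv( ⋃_{τ ∈ [t₀-δ, t₀+δ]} N_K(X(τ)) ∩ B̄(0,M) ) ⊆ N_K(a) for every M > 0, where conv denotes convex hull and B̄(0,M) the closed ball of radius M. -/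
/-- Localized consequence of outer semicontinuity of the normal cone map:
bounded convex combinations of normal vectors at nearby points of a continuous
trajectory lie in the normal cone at the point. -/
theorem stmt16 (d : ℕ) (K : Set (EuclideanSpace ℝ (Fin d)))
    (hne : K.Nonempty) (hcl : IsClosed K) (hconv : Convex ℝ K)
    (a : EuclideanSpace ℝ (Fin d)) (haK : a ∈ K)
    (X : ℝ → EuclideanSpace ℝ (Fin d)) (hX : Continuous X)
    (t₀ : ℝ) (hXt : X t₀ = a) (M : ℝ) (hM : 0 < M) :
    (⋂ δ > (0:ℝ), convexHull ℝ
        (⋃ τ ∈ Set.Icc (t₀ - δ) (t₀ + δ),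
          {v : EuclideanSpace ℝ (Fin d) | ∀ c ∈ K, (0:ℝ) ≤ @inner ℝ _ _ v (X τ - c)}
            ∩ Metric.closedBall 0 M)) ⊆
      {v : EuclideanSpace ℝ (Fin d) | ∀ c ∈ K, (0:ℝ) ≤ @inner ℝ _ _ v (a - c)} := by
  intro v hv c hc
  simp only [Set.mem_iInter₂] at hv
  have key : ∀ ε : ℝ, 0 < ε → -ε ≤ @inner ℝ _ _ v (a - c) := by
    intro ε hε
    obtain ⟨δ, hδ, hδ'⟩ := Metric.continuousAt_iff.mp hX.continuousAt (ε / M)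
      (by positivity)
    have hv' := hv (δ / 2) (by positivity)
    have hcv : Convex ℝ {w : EuclideanSpace ℝ (Fin d) | -ε ≤ @inner ℝ _ _ w (a - c)} := by
      refine convex_halfSpace_ge ⟨?_, ?_⟩ (-ε)
      · intro x y; exact inner_add_left x y (a - c)
      · intro r x; exact real_inner_smul_left x (a - c) r
    have hsub : (⋃ τ ∈ Set.Icc (t₀ - δ/2) (t₀ + δ/2),
        {w : EuclideanSpace ℝ (Fin d) | ∀ c ∈ K, (0:ℝ) ≤ @inner ℝ _ _ w (X τ - c)}
          ∩ Metric.closedBall 0 M) ⊆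
        {w : EuclideanSpace ℝ (Fin d) | -ε ≤ @inner ℝ _ _ w (a - c)} := by
      rintro w hw
      simp only [Set.mem_iUnion, Set.mem_inter_iff, Set.mem_setOf_eq,
        Metric.mem_closedBall, dist_zero_right] at hw
      obtain ⟨τ, hτ, hwN, hwB⟩ := hw
      have h1 : (0:ℝ) ≤ @inner ℝ _ _ w (X τ - c) := hwN c hc
      have h3 : dist (X τ) a < ε / M := by
        rw [← hXt]
        apply hδ'
        rw [Real.dist_eq]
        rw [Set.mem_Icc] at hτ
        rw [abs_lt]; constructor <;> linarith
      have h4 : ‖a - X τ‖ < ε / M := by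
        rw [← dist_eq_norm, dist_comm]; exact h3
      have h5 : @inner ℝ _ _ w (X τ - a) ≤ ‖w‖ * ‖X τ - a‖ := real_inner_le_norm _ _
      have h6 : ‖w‖ * ‖X τ - a‖ ≤ M * (ε / M) := by
        apply mul_le_mul hwB (le_of_lt ?_) (norm_nonneg _) (le_of_lt hM)
        rw [← norm_neg, neg_sub]; exact h4
      have h7 : M * (ε / M) = ε := by field_simp
      have h8 : @inner ℝ _ _ w (a - c) =
          @inner ℝ _ _ w (X τ - c) - @inner ℝ _ _ w (X τ - a) := by
        rw [← inner_sub_right]; congr 1; abel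
      rw [Set.mem_setOf_eq, h8]
      nlinarith [h5, h6]
    exact convexHull_min hsub hcv hv'
  by_contra h
  push_neg at h
  have := key (-(@inner ℝ _ _ v (a - c)) / 2) (by linarith)
  linarith
end
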